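/- For positive integers n and s, the largest integer p such that the power series (1-T)^p · H(T) has all nonnegative coefficients, where H(T) = ∑_{k≥s} C(n+k-1, k) T^k, equals ⌈n/(s+1)⌉. -/

import Mathlib

open PowerSeries Finset

namespace Stmt4Aux

/-- coefficient of `(1-X)^t` -/
lemma coeff_one_sub_X_pow (t r : ℕ) :
    (PowerSeries.coeff (R := ℤ) r) ((1 - PowerSeries.X) ^ t) = (-1) ^ r * (t.choose r : ℤ) := by
  induction t generalizing r with
  | zero =>
    cases r with
    | zero => simp
    | succ r => simp
  | succ t ih =>
    have h : (1 - X : ℤ⟦X⟧) ^ (t+1) = (1-X)^t - X * (1-X)^t := by ring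
    rw [h]
    cases r with
    | zero => simp [ih]
    | succ r =>
      rw [map_sub, coeff_succ_X_mul, ih, ih, Nat.choose_succ_succ]
      push_cast
      ring

/-- hockey stick -/
lemma hockey (b k : ℕ) : ∀ m, b.choose (k+1) + ∑ t ∈ range m, (b + t).choose k
    = (b + m).choose (k+1) := by
  intro m
  induction m with
  | zero => simp
  | succ m ih =>
    rw [sum_range_succ, ← Nat.add_assoc, ih, show b + (m+1) = (b+m)+1 from rfl,
      Nat.choose_succ_succ']
    omega

/-- the exact evaluation `Σ₁ = C(qs, s+1)` at the base point -/
lemma sigma1 (q s' b : ℕ) (hb : b + 1 = q * (s'+1)) :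
    ∑ t ∈ range q, t * (b + t).choose s' = (b+1).choose (s'+2) := by
  set S0 := ∑ t ∈ range q, (b+t).choose s' with hS0
  set S1 := ∑ t ∈ range q, (b+1+t).choose (s'+1) with hS1
  have eq1 : (∑ t ∈ range q, t * (b+t).choose s') + (b+1) * S0 = (s'+1) * S1 := by
    rw [hS0, hS1, Finset.mul_sum, Finset.mul_sum, ← Finset.sum_add_distrib]
    apply Finset.sum_congr rfl
    intro t _
    have e : t * (b+t).choose s' + (b+1) * ((b+t).choose s')
        = (b+t+1) * (b+t).choose s' := by ring
    rw [e]
    calc (b+t+1) * (b+t).choose s' = (b+t+1).choose (s'+1) * (s'+1) :=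
          Nat.add_one_mul_choose_eq (b+t) s'
      _ = (s'+1) * (b+1+t).choose (s'+1) := by
          rw [show b+1+t = b+t+1 by omega]; ring
  have eq4 : b.choose (s'+1) + S0 = (b+q).choose (s'+1) := hockey b s' q
  have eq5 : (b+1).choose (s'+2) + S1 = (b+1+q).choose (s'+2) := hockey (b+1) (s'+1) q
  have eq2 : (b+1) * b.choose (s'+1) = (b+1).choose (s'+2) * (s'+2) :=
    Nat.add_one_mul_choose_eq b (s'+1)
  have eq3' : q * (b+q).choose (s'+1) = (b+1+q).choose (s'+2) := by
    have hmul : q * (s'+2) = q*(s'+1) + q := by ring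
    have h2 : b + q + 1 = q * (s'+2) := by omega
    have step : q * (s'+2) * ((b+q).choose (s'+1)) = (b+q+1).choose (s'+2) * (s'+2) := by
      rw [← h2]; exact Nat.add_one_mul_choose_eq (b+q) (s'+1)
    have step2 : q * ((b+q).choose (s'+1)) * (s'+2) = (b+q+1).choose (s'+2) * (s'+2) := by
      rw [← step]; ring
    have := Nat.eq_of_mul_eq_mul_right (show 0 < s'+2 by omega) step2
    rw [show b+1+q = b+q+1 by omega]
    exact this
  zify at eq1 eq4 eq5 eq2 eq3' hb ⊢
  linear_combination eq1 - ((b:ℤ)+1)*eq4 + ((s':ℤ)+1)*eq5 + eq2 - ((s':ℤ)+1)*eq3'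
    - (((b+q).choose (s'+1) : ℕ) : ℤ) * hb

/-- `Q * C(t,r) ≤ t * C(Q,r)` for `t ≤ Q`, `r ≥ 1`. -/
lemma pivot_term (Q r t : ℕ) (hr : 1 ≤ r) (ht : t ≤ Q) :
    Q * t.choose r ≤ t * Q.choose r := by
  rcases Nat.eq_zero_or_pos t with rfl | htpos
  · obtain ⟨r', rfl⟩ : ∃ r', r = r' + 1 := ⟨r - 1, by omega⟩
    simp
  obtain ⟨t', rfl⟩ : ∃ t', t = t' + 1 := ⟨t - 1, by omega⟩
  obtain ⟨Q', rfl⟩ : ∃ Q', Q = Q' + 1 := ⟨Q - 1, by omega⟩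
  obtain ⟨r', rfl⟩ : ∃ r', r = r' + 1 := ⟨r - 1, by omega⟩
  have h1 : (t'+1) * t'.choose r' = (t'+1).choose (r'+1) * (r'+1) :=
    Nat.add_one_mul_choose_eq t' r'
  have h2 : (Q'+1) * Q'.choose r' = (Q'+1).choose (r'+1) * (r'+1) :=
    Nat.add_one_mul_choose_eq Q' r'
  have h3 : t'.choose r' ≤ Q'.choose r' := Nat.choose_le_choose r' (by omega)
  have key : (Q'+1) * (t'+1).choose (r'+1) * (r'+1)
      ≤ (t'+1) * (Q'+1).choose (r'+1) * (r'+1) := by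
    calc (Q'+1) * (t'+1).choose (r'+1) * (r'+1)
        = (Q'+1) * ((t'+1).choose (r'+1) * (r'+1)) := by ring
      _ = (Q'+1) * ((t'+1) * t'.choose r') := by rw [h1]
      _ = (t'+1) * ((Q'+1) * t'.choose r') := by ring
      _ ≤ (t'+1) * ((Q'+1) * Q'.choose r') :=
          Nat.mul_le_mul_left _ (Nat.mul_le_mul_left _ h3)
      _ = (t'+1) * ((Q'+1).choose (r'+1) * (r'+1)) := by rw [h2]
      _ = (t'+1) * (Q'+1).choose (r'+1) * (r'+1) := by ring
  exact Nat.le_of_mul_le_mul_right key (by omega)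

/-- inequality (P): `C(Q,r) * C(qs, s+1) ≤ Q * C(qs+r-1, s+r)`, with `Q = q-1`, `s ≥ 2`. -/
lemma Pineq (q s : ℕ) (hs : 2 ≤ s) (hq : 2 ≤ q) :
    ∀ r, 1 ≤ r → (q-1).choose r * (q*s).choose (s+1) ≤ (q-1) * (q*s + r - 1).choose (s+r) := by
  intro r hr
  induction r with
  | zero => omega
  | succ r ih =>
    rcases Nat.eq_zero_or_pos r with rfl | hrpos
    · -- base case r = 1
      rw [Nat.choose_one_right, show q*s + 1 - 1 = q*s + 0 by omega]
      apply Nat.mul_le_mul_left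
      exact Nat.choose_le_choose _ (by omega)
    have IH := ih hrpos
    -- if r+1 > q-1 the LHS vanishes
    rcases le_or_gt (q-1) r with hle | hgt
    · rw [Nat.choose_eq_zero_of_lt (by omega), Nat.zero_mul]
      exact Nat.zero_le _
    -- key numeric inequality
    have hqs1 : 1 ≤ q * s := Nat.one_le_iff_ne_zero.mpr (by positivity)
    have key : (q - 1 - r) * (s+r+1) ≤ (r+1) * (q*s + r) := by
      obtain ⟨a, ha⟩ : ∃ a, q - 1 - r = a + 1 := ⟨q - 2 - r, by omega⟩
      have hq' : q = a + r + 2 := by omega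
      obtain ⟨s2, rfl⟩ : ∃ s2, s = s2 + 2 := ⟨s - 2, by omega⟩
      obtain ⟨r2, hr2⟩ : ∃ r2, r = r2 + 1 := ⟨r - 1, by omega⟩
      rw [ha, hq', hr2]
      nlinarith [Nat.zero_le (a*s2), Nat.zero_le (a*r2), Nat.zero_le (r2*s2)]
    have e1 : (q-1).choose (r+1) * (r+1) = (q-1).choose r * (q-1-r) :=
      Nat.choose_succ_right_eq (q-1) r
    have e2 : (q*s + r) * (q*s + r - 1).choose (s+r) = (q*s+r).choose (s+r+1) * (s+r+1) := by
      have : q*s + r = (q*s + r - 1) + 1 := by omega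
      rw [this]
      exact Nat.add_one_mul_choose_eq (q*s+r-1) (s+r)
    have chain : ((q-1).choose (r+1) * (q*s).choose (s+1)) * ((r+1) * (s+r+1))
        ≤ ((q-1) * (q*s + (r+1) - 1).choose (s+(r+1))) * ((r+1) * (s+r+1)) := by
      have ht : q*s + (r+1) - 1 = q*s + r := by omega
      have ht2 : s + (r+1) = (s+r)+1 := by omega
      rw [ht, ht2]
      calc ((q-1).choose (r+1) * (q*s).choose (s+1)) * ((r+1) * (s+r+1))
          = ((q-1).choose (r+1) * (r+1)) * ((q*s).choose (s+1) * (s+r+1)) := by ring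
        _ = ((q-1).choose r * (q*s).choose (s+1)) * ((q-1-r) * (s+r+1)) := by
            rw [e1]; ring
        _ ≤ ((q-1).choose r * (q*s).choose (s+1)) * ((r+1) * (q*s + r)) :=
            Nat.mul_le_mul_left _ key
        _ ≤ ((q-1) * (q*s + r - 1).choose (s+r)) * ((r+1) * (q*s + r)) :=
            Nat.mul_le_mul_right _ IH
        _ = ((q-1) * (r+1)) * ((q*s + r) * (q*s + r - 1).choose (s+r)) := by ring
        _ = ((q-1) * (r+1)) * ((q*s+r).choose (s+r+1) * (s+r+1)) := by rw [e2]
        _ = ((q-1) * (q*s+r).choose ((s+r)+1)) * ((r+1) * (s+r+1)) := by ring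
    exact Nat.le_of_mul_le_mul_right chain (by positivity)

/-- the key inequality -/
lemma key_ineq : ∀ s' q r W : ℕ, 1 ≤ r → (q-1)*(s'+1) ≤ W →
    ∑ t ∈ range q, t.choose r * (W + t + s').choose s' ≤ (W + s' + r).choose (s'+1+r) := by
  intro s'
  induction s' with
  | zero =>
    intro q r W hr hW
    have hL : ∑ t ∈ range q, t.choose r * (W + t + 0).choose 0 = ∑ t ∈ range q, t.choose r := by
      apply Finset.sum_congr rfl
      intro t _
      simp
    rw [hL]
    have h2 : ∑ t ∈ range q, t.choose r = q.choose (r+1) := by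
      have h := hockey 0 r q
      simp only [Nat.zero_add] at h
      rw [← h, Nat.choose_eq_zero_of_lt (by omega)]
      omega
    rw [h2, show 0+1+r = r+1 by omega]
    exact Nat.choose_le_choose _ (by omega)
  | succ s' IH =>
    intro q r W hr hW
    -- inner induction on W starting from the base point
    induction W, hW using Nat.le_induction with
    | base =>
      -- trivial cases q = 0, 1
      rcases Nat.lt_or_ge q 2 with hq2 | hq2
      · interval_cases q
        · simp
        · simp [Nat.choose_eq_zero_of_lt (show 0 < r by omega)]
      obtain ⟨Q, rfl⟩ : ∃ Q, q = Q + 2 := ⟨q - 2, by omega⟩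
      -- the pivot argument at the base point
      set b := (Q+1)*(s'+2) + s'+1 with hbdef
      have eQ : Q+2-1 = Q+1 := by omega
      have hWb : ∀ t : ℕ, (Q+2-1)*(s'+1+1) + t + (s'+1) = b + t := by
        intro t; rw [eQ, hbdef]; ring
      have hb1 : b + 1 = (Q+2) * (s'+2) := by rw [hbdef]; ring
      have hL : ∑ t ∈ range (Q+2), t.choose r * ((Q+2-1)*(s'+1+1) + t + (s'+1)).choose (s'+1)
          = ∑ t ∈ range (Q+2), t.choose r * (b + t).choose (s'+1) := by
        apply Finset.sum_congr rfl; intro t _; rw [hWb t]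
      rw [hL]
      have key : (Q+1) * ∑ t ∈ range (Q+2), t.choose r * (b + t).choose (s'+1)
          ≤ (Q+1) * ((Q+2-1)*(s'+1+1) + (s'+1) + r).choose (s'+1+1+r) := by
        calc (Q+1) * ∑ t ∈ range (Q+2), t.choose r * (b + t).choose (s'+1)
            = ∑ t ∈ range (Q+2), ((Q+1) * t.choose r) * (b + t).choose (s'+1) := by
              rw [Finset.mul_sum]; apply Finset.sum_congr rfl; intro t _; ring
          _ ≤ ∑ t ∈ range (Q+2), (t * (Q+1).choose r) * (b + t).choose (s'+1) := by
              apply Finset.sum_le_sum; intro t ht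
              exact Nat.mul_le_mul_right _ (pivot_term (Q+1) r t hr
                (by have := Finset.mem_range.mp ht; omega))
          _ = (Q+1).choose r * ∑ t ∈ range (Q+2), t * (b + t).choose (s'+1) := by
              rw [Finset.mul_sum]; apply Finset.sum_congr rfl; intro t _; ring
          _ = (Q+1).choose r * (b+1).choose (s'+3) := by
              rw [sigma1 (Q+2) (s'+1) b (by rw [hb1])]
          _ ≤ (Q+1) * ((Q+2)*(s'+2) + r - 1).choose ((s'+2)+r) := by
              have hP := Pineq (Q+2) (s'+2) (by omega) (by omega) r hr
              have e2 : (b+1).choose (s'+3) = ((Q+2)*(s'+2)).choose ((s'+2)+1) := by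
                rw [hb1]
              rw [e2, ← eQ]
              exact hP
          _ = (Q+1) * ((Q+2-1)*(s'+1+1) + (s'+1) + r).choose (s'+1+1+r) := by
              have a1 : (Q+2)*(s'+2) = (Q+2-1)*(s'+1+1) + (s'+2) := by
                rw [eQ]; ring
              congr 1
              congr 1
              omega
      exact Nat.le_of_mul_le_mul_left key (by omega)
    | succ W hWge IHW =>
      have pascal1 : ∀ t : ℕ, ((W+1) + t + (s'+1)).choose (s'+1)
          = ((W+1) + t + s').choose s' + (W + t + (s'+1)).choose (s'+1) := by
        intro t
        have e : (W+1) + t + (s'+1) = (W + t + (s'+1)) + 1 := by omega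
        rw [e, Nat.choose_succ_succ']
        congr 2
        omega
      have hsplit : ∑ t ∈ range q, t.choose r * ((W+1) + t + (s'+1)).choose (s'+1)
          = (∑ t ∈ range q, t.choose r * ((W+1) + t + s').choose s')
            + ∑ t ∈ range q, t.choose r * (W + t + (s'+1)).choose (s'+1) := by
        rw [← Finset.sum_add_distrib]
        apply Finset.sum_congr rfl
        intro t _
        rw [pascal1 t, Nat.mul_add]
      rw [hsplit]
      have h1 : ∑ t ∈ range q, t.choose r * ((W+1) + t + s').choose s'
          ≤ ((W+1) + s' + r).choose (s'+1+r) := by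
        apply IH q r (W+1) hr
        calc (q-1)*(s'+1) ≤ (q-1)*(s'+1+1) := Nat.mul_le_mul_left _ (by omega)
          _ ≤ W + 1 := by omega
      have h2 : ∑ t ∈ range q, t.choose r * (W + t + (s'+1)).choose (s'+1)
          ≤ (W + (s'+1) + r).choose ((s'+1)+1+r) := IHW
      calc _ ≤ ((W+1) + s' + r).choose (s'+1+r) + (W + (s'+1) + r).choose ((s'+1)+1+r) :=
            Nat.add_le_add h1 h2
        _ = ((W+1) + (s'+1) + r).choose ((s'+1)+1+r) := by
            have e1 : (W+1) + (s'+1) + r = (W + (s'+1) + r) + 1 := by omega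
            have e2 : (s'+1)+1+r = (s'+1+r) + 1 := by omega
            rw [e1, e2, Nat.choose_succ_succ']
            congr 2
            omega

/-- the Hilbert series of `m^(s'+1)` in `n` variables -/
noncomputable def Hser (s' n : ℕ) : PowerSeries ℤ :=
  PowerSeries.mk fun j => if s' + 1 ≤ j then ((n + j - 1).choose j : ℤ) else 0

lemma one_step (s' m : ℕ) :
    (1 - X) * Hser s' (m+1) = (((m + s').choose s' : ℤ)) • X^(s'+1) + Hser s' m := by
  have key : Hser s' (m+1)
      = (((m + s').choose s' : ℤ)) • X^(s'+1) + Hser s' m + X * Hser s' (m+1) := by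
    ext k
    simp only [map_add, LinearMap.map_smul_of_tower, coeff_X_pow, smul_eq_mul]
    cases k with
    | zero =>
      rw [coeff_zero_X_mul]
      simp [Hser, coeff_mk]
    | succ k =>
      rw [coeff_succ_X_mul]
      simp only [Hser, coeff_mk]
      rcases lt_trichotomy (k+1) (s'+1) with h | h | h
      · rw [if_neg (by omega), if_neg (by omega), if_neg (by omega), if_neg (by omega)]
        simp
      · have hk : k = s' := by omega
        subst hk
        rw [if_pos (by omega), if_pos rfl, if_pos (by omega), if_neg (by omega)]
        have e1 : m + 1 + (k+1) - 1 = (m + k) + 1 := by omega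
        have e2 : m + (k+1) - 1 = m + k := by omega
        rw [e1, e2, Nat.choose_succ_succ']
        push_cast
        ring
      · rw [if_pos (by omega), if_neg (by omega), if_pos (by omega), if_pos (by omega)]
        have e1 : m + 1 + (k+1) - 1 = (m + k) + 1 := by omega
        have e2 : m + (k+1) - 1 = m + k := by omega
        have e3 : m + 1 + k - 1 = m + k := by omega
        rw [e1, e2, e3, Nat.choose_succ_succ']
        push_cast
        ring
  calc (1 - X) * Hser s' (m+1) = Hser s' (m+1) - X * Hser s' (m+1) := by ring
    _ = (((m + s').choose s' : ℤ)) • X^(s'+1) + Hser s' m := by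
        nth_rewrite 1 [key]
        ring

/-- decomposition `(1-X)^q * H_{W+q} = Σ_t c_t • X^(s'+1) (1-X)^t + H_W`. -/
lemma decomp (s' : ℕ) : ∀ q W : ℕ, (1 - X)^q * Hser s' (W + q) =
    (∑ t ∈ range q, (((W + t + s').choose s' : ℤ)) • (X^(s'+1) * (1-X)^t)) + Hser s' W := by
  intro q
  induction q with
  | zero => intro W; simp
  | succ q ih =>
    intro W
    have h1 : W + (q+1) = (W+1) + q := by omega
    have step : (1-X:ℤ⟦X⟧)^(q+1) * Hser s' ((W+1)+q) = (1-X) * ((1-X)^q * Hser s' ((W+1)+q)) := by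
      ring
    rw [h1, step, ih (W+1), mul_add, Finset.mul_sum, one_step s' W]
    have hterm : ∀ t ∈ range q, (1-X:ℤ⟦X⟧) * ((((W+1+t+s').choose s' : ℤ)) • (X^(s'+1)*(1-X)^t))
        = (((W+(t+1)+s').choose s' : ℤ)) • (X^(s'+1)*(1-X)^(t+1)) := by
      intro t _
      have e : W+1+t+s' = W+(t+1)+s' := by omega
      rw [mul_smul_comm, e]
      congr 1
      ring
    rw [Finset.sum_congr rfl hterm, Finset.sum_range_succ']
    simp only [pow_zero, mul_one, Nat.add_zero]
    abel

lemma coeff_decomp (s' q W r : ℕ) :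
    coeff (R := ℤ) (s'+1+r) ((1 - X)^q * Hser s' (W+q))
      = (-1)^r * ((∑ t ∈ range q, (W+t+s').choose s' * t.choose r : ℕ) : ℤ)
        + ((W+s'+r).choose (s'+1+r) : ℤ) := by
  rw [decomp, map_add, map_sum]
  have hterm : ∀ t ∈ range q,
      (coeff (R := ℤ) (s'+1+r)) ((((W+t+s').choose s' : ℤ)) • (X^(s'+1) * (1-X)^t))
      = (-1)^r * (((W+t+s').choose s' * t.choose r : ℕ) : ℤ) := by
    intro t _
    rw [map_smul]
    have e : s'+1+r = r + (s'+1) := by omega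
    rw [e, coeff_X_pow_mul, coeff_one_sub_X_pow, smul_eq_mul]
    push_cast
    ring
  rw [Finset.sum_congr rfl hterm, ← Finset.mul_sum]
  have hH : (coeff (R := ℤ) (s'+1+r)) (Hser s' W) = ((W+s'+r).choose (s'+1+r) : ℤ) := by
    rw [Hser, coeff_mk, if_pos (by omega)]
    congr 2
    omega
  rw [hH]
  congr 2
  push_cast
  ring

lemma coeff_lt (s' n q k : ℕ) (hk : k < s'+1) :
    coeff (R := ℤ) k ((1 - X)^q * Hser s' n) = 0 := by
  rw [coeff_mul]
  apply Finset.sum_eq_zero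
  rintro ⟨i, j⟩ hij
  rw [Finset.HasAntidiagonal.mem_antidiagonal] at hij
  have hj : ¬ (s'+1 ≤ j) := by omega
  show (coeff (R := ℤ) i) _ * (coeff (R := ℤ) j) (Hser s' n) = 0
  rw [Hser, coeff_mk, if_neg hj, mul_zero]

lemma coeff_sp2 (s' n p : ℕ) :
    coeff (R := ℤ) (s'+2) ((1 - X)^p * Hser s' n)
      = ((n+s'+1).choose (s'+2) : ℤ) - (p : ℤ) * ((n+s').choose (s'+1) : ℤ) := by
  rw [coeff_mul, Finset.Nat.sum_antidiagonal_eq_sum_range_succ_mk]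
  simp only [Nat.succ_eq_add_one]
  rw [Finset.sum_range_succ', Finset.sum_range_succ']
  have h0 : ∀ i ∈ range (s'+1),
      (coeff (R := ℤ) (i+1+1)) ((1-X)^p) * (coeff (R := ℤ) (s'+2-(i+1+1))) (Hser s' n) = 0 := by
    intro i _
    have : ¬ (s'+1 ≤ s'+2-(i+1+1)) := by omega
    rw [Hser, coeff_mk, if_neg this, mul_zero]
  rw [Finset.sum_congr rfl h0, Finset.sum_const_zero, zero_add]
  rw [coeff_one_sub_X_pow, coeff_one_sub_X_pow]
  rw [Hser, coeff_mk, coeff_mk]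
  rw [if_pos (by omega : s'+1 ≤ s'+2-(0+1)), if_pos (by omega : s'+1 ≤ s'+2-0)]
  have e1 : s'+2-(0+1) = s'+1 := by omega
  have e2 : s'+2-0 = s'+2 := by omega
  rw [e1, e2]
  have e3 : n + (s'+1) - 1 = n + s' := by omega
  have e4 : n + (s'+2) - 1 = n + s' + 1 := by omega
  rw [e3, e4, Nat.choose_one_right, Nat.choose_zero_right]
  push_cast
  ring

lemma nonneg_mul (f g : ℤ⟦X⟧) (hf : ∀ k, 0 ≤ coeff (R := ℤ) k f) (hg : ∀ k, 0 ≤ coeff (R := ℤ) k g) :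
    ∀ k, 0 ≤ coeff (R := ℤ) k (f * g) := by
  intro k
  rw [coeff_mul]
  exact Finset.sum_nonneg fun p _ => mul_nonneg (hf _) (hg _)

noncomputable def ones : ℤ⟦X⟧ := PowerSeries.mk fun _ => 1

lemma ones_mul_one_sub : (1 - X) * ones = 1 := by
  ext k
  rw [show ((1:ℤ⟦X⟧) - X) * ones = ones - X * ones by ring, map_sub]
  cases k with
  | zero => rw [coeff_zero_X_mul]; simp [ones]
  | succ k => rw [coeff_succ_X_mul]; simp [ones, coeff_one]

lemma ones_pow_nonneg (d : ℕ) : ∀ k, 0 ≤ coeff (R := ℤ) k (ones ^ d) := by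
  induction d with
  | zero => intro k; rw [pow_zero, coeff_one]; split <;> norm_num
  | succ d ih =>
    rw [pow_succ]
    exact nonneg_mul _ _ ih (by intro k; simp [ones])

lemma descend (f : ℤ⟦X⟧) (p p' : ℕ) (h : p' ≤ p) (hp : ∀ k, 0 ≤ coeff (R := ℤ) k ((1-X)^p * f)) :
    ∀ k, 0 ≤ coeff (R := ℤ) k ((1-X)^p' * f) := by
  have key : (1-X:ℤ⟦X⟧)^p' * f = ones^(p-p') * ((1-X)^p * f) := by
    have h2 : (1-X:ℤ⟦X⟧)^p = (1-X)^(p-p') * (1-X)^p' := by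
      rw [← pow_add]
      congr 1
      omega
    have h3 : ones^(p-p') * (1-X:ℤ⟦X⟧)^(p-p') = 1 := by
      rw [← mul_pow, mul_comm ones, ones_mul_one_sub, one_pow]
    calc (1-X:ℤ⟦X⟧)^p' * f = (ones^(p-p') * (1-X)^(p-p')) * ((1-X)^p' * f) := by
          rw [h3, one_mul]
      _ = ones^(p-p') * (((1-X)^(p-p') * (1-X)^p') * f) := by ring
      _ = ones^(p-p') * ((1-X)^p * f) := by rw [← h2]
  rw [key]
  exact nonneg_mul _ _ (ones_pow_nonneg _) hp

end Stmt4Aux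

open Stmt4Aux

theorem stmt_4 (n s : ℕ) (hn : 0 < n) (hs : 0 < s) :
    IsGreatest
      {p : ℕ | ∀ k : ℕ, 0 ≤ (PowerSeries.coeff (R := ℤ) k)
        ((1 - PowerSeries.X) ^ p *
          PowerSeries.mk fun j => if s ≤ j then ((n + j - 1).choose j : ℤ) else 0)}
      ((n + s) / (s + 1)) := by
  obtain ⟨s', rfl⟩ : ∃ s', s = s' + 1 := ⟨s - 1, by omega⟩
  have hHeq : (PowerSeries.mk fun j => if s'+1 ≤ j then ((n + j - 1).choose j : ℤ) else 0)
      = Hser s' n := rfl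
  set q := (n + (s' + 1)) / (s' + 1 + 1) with hq
  have hmul : n * (s'+1+1) = n * (s'+1) + n := by ring
  have hle1 : s'+1 ≤ n * (s'+1) := Nat.le_mul_of_pos_left _ hn
  have hqn : q ≤ n := by
    have h1 : q ≤ (n * (s'+1+1)) / (s'+1+1) := Nat.div_le_div_right (by omega)
    rwa [Nat.mul_div_cancel n (by omega : 0 < s'+1+1)] at h1
  have hdml : (s'+1+1) * q + (n + (s'+1)) % (s'+1+1) = n + (s'+1) :=
    Nat.div_add_mod (n + (s'+1)) (s'+1+1)
  have hmlt : (n + (s'+1)) % (s'+1+1) < s'+1+1 := Nat.mod_lt _ (by omega)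
  constructor
  · -- membership
    simp only [Set.mem_setOf_eq]
    intro k
    rw [hHeq]
    have hW : n = (n - q) + q := by omega
    set W := n - q with hWdef
    have hWge : (q-1)*(s'+1) ≤ W := by
      have e1 : (s'+1+1) * q = q*(s'+1) + q := by ring
      have e2 : (q-1)*(s'+1) = q*(s'+1) - (s'+1) := by rw [Nat.sub_mul, one_mul]
      rw [e2, hWdef]
      omega
    rcases Nat.lt_or_ge k (s'+1) with hk | hk
    · rw [coeff_lt s' n q k hk]
    · obtain ⟨r, rfl⟩ : ∃ r, k = s'+1+r := ⟨k - (s'+1), by omega⟩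
      rw [show n = W + q from hW, coeff_decomp s' q W r]
      rcases Nat.eq_zero_or_pos r with hr0 | hr0
      · subst hr0
        norm_num
        positivity
      · have hkey := key_ineq s' q r W hr0 hWge
        have hkey' : ((∑ t ∈ range q, (W+t+s').choose s' * t.choose r : ℕ) : ℤ)
            ≤ (((W+s'+r).choose (s'+1+r) : ℕ) : ℤ) := by
          have : (∑ t ∈ range q, (W+t+s').choose s' * t.choose r : ℕ)
              ≤ (W+s'+r).choose (s'+1+r) := by
            calc (∑ t ∈ range q, (W+t+s').choose s' * t.choose r : ℕ)
                = ∑ t ∈ range q, t.choose r * (W+t+s').choose s' := by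
                  apply Finset.sum_congr rfl; intro t _; ring
              _ ≤ _ := hkey
          exact_mod_cast this
        have hS : (0:ℤ) ≤ ((∑ t ∈ range q, (W+t+s').choose s' * t.choose r : ℕ) : ℤ) :=
          Int.natCast_nonneg _
        rcases Nat.even_or_odd r with he | ho
        · rw [he.neg_one_pow]
          have : (0:ℤ) ≤ (((W+s'+r).choose (s'+1+r) : ℕ) : ℤ) := Int.natCast_nonneg _
          linarith
        · rw [ho.neg_one_pow]
          linarith
  · -- q is an upper bound
    intro p hp
    simp only [Set.mem_setOf_eq] at hp
    by_contra hc
    push_neg at hc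
    rw [hHeq] at hp
    have hd := descend (Hser s' n) p (q+1) (by omega) hp
    have h2 := hd (s'+2)
    rw [coeff_sp2 s' n (q+1)] at h2
    -- numeric contradiction
    have hC3 : 0 < (n+s').choose (s'+1) := Nat.choose_pos (by omega)
    have hA : ((n+s')+1) * ((n+s').choose (s'+1)) = ((n+s'+1).choose (s'+1+1)) * (s'+1+1) :=
      Nat.add_one_mul_choose_eq (n+s') (s'+1)
    have hlt : n+s'+1 < (q+1)*(s'+1+1) := by
      have e : (q+1)*(s'+1+1) = (s'+1+1)*q + (s'+1+1) := by ring
      omega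
    -- cast to ℤ
    have hAz : ((n:ℤ)+s'+1) * ((n+s').choose (s'+1) : ℤ)
        = ((n+s'+1).choose (s'+2) : ℤ) * ((s':ℤ)+2) := by exact_mod_cast hA
    have hltz : ((n:ℤ)+s'+1) < ((q:ℤ)+1)*((s':ℤ)+2) := by exact_mod_cast hlt
    have hC3z : (0:ℤ) < ((n+s').choose (s'+1) : ℤ) := by exact_mod_cast hC3
    have hpz : ((q:ℤ)+1) ≤ (p:ℤ) := by exact_mod_cast hc
    have hq1C : ((q:ℤ)+1) * (((n+s').choose (s'+1) : ℕ) : ℤ) ≤ (((n+s'+1).choose (s'+2) : ℕ) : ℤ) := by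
      push_cast at h2
      linarith
    nlinarith [mul_lt_mul_of_pos_right hltz hC3z,
      mul_le_mul_of_nonneg_right hq1C (show (0:ℤ) ≤ (s':ℤ)+2 by positivity)]
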